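/- Every Z-contraction is a Meir-Keeler contraction. That is, if T : X → X is a Z-contraction with respect to some simulation function ζ, then for every ε > 0 there exists δ > 0 such that for all x, y ∈ X, ε ≤ d(x,y) < ε + δ implies d(Tx, Ty) < ε. -/

import Mathlib

open Filter Topology

def IsSimulation (ζ : ℝ → ℝ → ℝ) : Prop :=
  ζ 0 0 = 0 ∧
  (∀ t s : ℝ, 0 < t → 0 < s → ζ t s < s - t) ∧
  (∀ (t s : ℕ → ℝ) (L : ℝ), 0 < L → (∀ n, 0 < t n) → (∀ n, 0 < s n) →
    Tendsto t atTop (𝓝 L) → Tendsto s atTop (𝓝 L) →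
    Filter.limsup (fun n => ζ (t n) (s n)) atTop < 0)

def IsMeirKeeler {X : Type*} [MetricSpace X] (T : X → X) : Prop :=
  ∀ ε > 0, ∃ δ > 0, ∀ x y : X, ε ≤ dist x y → dist x y < ε + δ → dist (T x) (T y) < ε

def IsZContraction {X : Type*} [MetricSpace X] (T : X → X) (ζ : ℝ → ℝ → ℝ) : Prop :=
  IsSimulation ζ ∧ ∀ x y : X, 0 ≤ ζ (dist (T x) (T y)) (dist x y)

theorem z_contraction_is_meir_keeler {X : Type*} [MetricSpace X] (T : X → X)
    (ζ : ℝ → ℝ → ℝ) (hT : IsZContraction T ζ) : IsMeirKeeler T := by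
  obtain ⟨⟨_, hcontr, hseq⟩, hZ⟩ := hT
  intro ε hε
  by_contra h
  push_neg at h
  have hchoice : ∀ n : ℕ, ∃ x y : X, ε ≤ dist x y ∧ dist x y < ε + 1 / (n + 1) ∧
      ε ≤ dist (T x) (T y) := by
    intro n
    obtain ⟨x, y, h1, h2, h3⟩ := h (1 / (n + 1)) (by positivity)
    exact ⟨x, y, h1, h2, h3⟩
  choose x y hxy1 hxy2 hxy3 using hchoice
  set t : ℕ → ℝ := fun n => dist (T (x n)) (T (y n)) with ht
  set s : ℕ → ℝ := fun n => dist (x n) (y n) with hs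
  have htpos : ∀ n, 0 < t n := fun n => lt_of_lt_of_le hε (hxy3 n)
  have hspos : ∀ n, 0 < s n := fun n => lt_of_lt_of_le hε (hxy1 n)
  have hts : ∀ n, t n < s n := by
    intro n
    have h1 := hcontr (t n) (s n) (htpos n) (hspos n)
    have h2 := hZ (x n) (y n)
    linarith
  have haux : Tendsto (fun n : ℕ => ε + 1 / ((n : ℝ) + 1)) atTop (𝓝 ε) := by
    have := tendsto_one_div_add_atTop_nhds_zero_nat (𝕜 := ℝ)
    simpa using tendsto_const_nhds.add this
  have hslim : Tendsto s atTop (𝓝 ε) := by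
    apply tendsto_of_tendsto_of_tendsto_of_le_of_le tendsto_const_nhds haux
    · exact hxy1
    · exact fun n => (hxy2 n).le
  have htlim : Tendsto t atTop (𝓝 ε) := by
    apply tendsto_of_tendsto_of_tendsto_of_le_of_le tendsto_const_nhds haux
    · exact hxy3
    · exact fun n => le_trans (hts n).le (hxy2 n).le
  have hlimsup := hseq t s ε hε htpos hspos htlim hslim
  have hbdd : IsBoundedUnder (· ≤ ·) atTop (fun n => ζ (t n) (s n)) := by
    refine ⟨1, eventually_map.mpr (Eventually.of_forall fun n => ?_)⟩
    have h1 := hcontr (t n) (s n) (htpos n) (hspos n)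
    have h2 : s n - t n ≤ 1 / ((n : ℝ) + 1) := by
      have := hxy2 n
      have := hxy3 n
      simp only [t, s] at *
      linarith
    have h3 : 1 / ((n : ℝ) + 1) ≤ 1 := by
      rw [div_le_one (by positivity)]
      simp [Nat.cast_nonneg]
    linarith
  have hge : (0 : ℝ) ≤ limsup (fun n => ζ (t n) (s n)) atTop := by
    apply le_limsup_of_frequently_le _ hbdd
    exact Frequently.of_forall fun n => hZ (x n) (y n)
  linarith
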